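/- Let 1 ≤ k₋ < k₊ and n ≥ 1 be integers and set q = (k₊+k₋)n+1. Suppose an integer d divides q, no prime p ≤ k₊ divides d (i.e., gcd(d, k₊#) = 1 where k₊# is the primorial of k₊), and n < d < q. Then there is no splitting ℤ_q = (M,S) with multiplier set M = [-k₋,k₊]* = {m ∈ ℤ : -k₋ ≤ m ≤ k₊, m ≠ 0} and |S| = n. (Equivalently, the (k₊,k₋,n)-quasi-cross does not lattice tile ℝⁿ.) -/

import Mathlib

/-- `(M, S)` is a splitting of `ℤ_q`: `M ⊆ ℤ \ {0}`, and the products `m·s`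
(for `m ∈ M`, `s ∈ S`) are pairwise distinct and cover exactly the nonzero
elements of `ZMod q`. -/
def IsSplitting (q : ℕ) (M : Finset ℤ) (S : Finset (ZMod q)) : Prop :=
  (0 : ℤ) ∉ M ∧
  Set.InjOn (fun p : ℤ × ZMod q => (p.1 : ZMod q) * p.2) ↑(M ×ˢ S) ∧
  (fun p : ℤ × ZMod q => (p.1 : ZMod q) * p.2) '' ↑(M ×ˢ S) = {a : ZMod q | a ≠ 0}

theorem stmt_10 (kp km n : ℕ) (hkm : 1 ≤ km) (hk : km < kp) (hn : 1 ≤ n)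
    (d : ℕ) (hdvd : d ∣ (kp + km) * n + 1)
    (hcop : ∀ p : ℕ, Nat.Prime p → p ≤ kp → ¬ p ∣ d)
    (hlow : n < d) (hhigh : d < (kp + km) * n + 1) :
    ¬ ∃ S : Finset (ZMod ((kp + km) * n + 1)),
        IsSplitting ((kp + km) * n + 1)
          ((Finset.Icc (-(km : ℤ)) (kp : ℤ)).erase 0) S ∧ S.card = n := by
  set q : ℕ := (kp + km) * n + 1 with hq
  rintro ⟨S, ⟨hM0, hinj, hcover⟩, hScard⟩
  haveI : NeZero q := ⟨by omega⟩
  have hd1 : 1 < d := by omega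
  haveI : NeZero d := ⟨by omega⟩
  set M : Finset ℤ := (Finset.Icc (-(km : ℤ)) (kp : ℤ)).erase 0 with hMdef
  set φ : ZMod q →+* ZMod d := ZMod.castHom hdvd (ZMod d) with hφ
  -- every multiplier is a unit mod d
  have hunit : ∀ m : ℤ, m ∈ M → IsUnit ((m : ZMod d)) := by
    intro m hm
    obtain ⟨hm0, hmIcc⟩ := Finset.mem_erase.mp hm
    rw [Finset.mem_Icc] at hmIcc
    have habs : m.natAbs ≤ kp := by omega
    have hco : Nat.Coprime m.natAbs d := by
      by_contra h
      obtain ⟨p, hp, hpdvd⟩ := Nat.exists_prime_and_dvd h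
      have h1 : p ∣ m.natAbs := hpdvd.trans (Nat.gcd_dvd_left _ _)
      have h2 : p ∣ d := hpdvd.trans (Nat.gcd_dvd_right _ _)
      have hple : p ≤ m.natAbs := Nat.le_of_dvd (by omega) h1
      exact hcop p hp (by omega) h2
    have hu : IsUnit ((m.natAbs : ZMod d)) := (ZMod.isUnit_iff_coprime _ _).mpr hco
    rcases Int.natAbs_eq m with h | h
    · rw [h, Int.cast_natCast]; exact hu
    · rw [h, Int.cast_neg, Int.cast_natCast]; exact hu.neg
  -- membership criterion for kernel of φ in terms of val
  have hker : ∀ x : ZMod q, φ x = 0 ↔ d ∣ x.val := by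
    intro x
    have : φ x = ((x.val : ℕ) : ZMod d) := by
      rw [hφ, ZMod.castHom_apply, ← ZMod.natCast_val]
    rw [this, ZMod.natCast_eq_zero_iff]
  set S₀ : Finset (ZMod q) := S.filter (fun s => φ s = 0) with hS₀
  set T : Finset (ZMod q) := Finset.univ.filter (fun x : ZMod q => x ≠ 0 ∧ φ x = 0) with hT
  -- the image of M ×ˢ S₀ is exactly T
  have himg : (M ×ˢ S₀).image (fun p : ℤ × ZMod q => (p.1 : ZMod q) * p.2) = T := by
    ext x
    simp only [Finset.mem_image, Finset.mem_product, Finset.mem_filter, Finset.mem_univ,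
      true_and, hS₀, hT]
    constructor
    · rintro ⟨⟨m, s⟩, ⟨hm, hs, hφs⟩, rfl⟩
      constructor
      · have : ((m : ZMod q) * s) ∈ {a : ZMod q | a ≠ 0} := by
          rw [← hcover]
          exact ⟨(m, s), by simpa using ⟨hm, hs⟩, rfl⟩
        exact this
      · rw [map_mul, hφs, mul_zero]
    · rintro ⟨hx0, hxφ⟩
      have : x ∈ (fun p : ℤ × ZMod q => (p.1 : ZMod q) * p.2) '' ↑(M ×ˢ S) := by
        rw [hcover]; exact hx0
      obtain ⟨⟨m, s⟩, hms, rfl⟩ := this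
      rw [Finset.mem_coe, Finset.mem_product] at hms
      have hφs : φ s = 0 := by
        have h1 : (m : ZMod d) * φ s = 0 := by
          rw [← map_intCast φ m, ← map_mul]; exact hxφ
        obtain ⟨u, hu⟩ := hunit m hms.1
        rw [← hu] at h1
        exact (Units.mul_right_eq_zero u).mp h1
      exact ⟨(m, s), ⟨hms.1, hms.2, hφs⟩, rfl⟩
  -- first count: |T| = (kp+km) * |S₀|
  have hMcard : M.card = kp + km := by
    rw [hMdef, Finset.card_erase_of_mem (by simp), Int.card_Icc]
    omega
  have hTcard1 : T.card = (kp + km) * S₀.card := by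
    rw [← himg, Finset.card_image_of_injOn, Finset.card_product, hMcard]
    exact hinj.mono (by
      intro p hp
      rw [Finset.mem_coe, Finset.mem_product] at hp ⊢
      exact ⟨hp.1, (Finset.mem_filter.mp hp.2).1⟩)
  -- second count: |T| = q/d - 1, via the kernel having q/d elements
  have hde : d * (q / d) = q := Nat.mul_div_cancel' hdvd
  have hkerEq : (Finset.univ.filter (fun x : ZMod q => φ x = 0)).card = q / d := by
    rw [← Finset.card_range (q / d)]
    apply Finset.card_nbij' (fun x => x.val / d) (fun a => ((d * a : ℕ) : ZMod q))
    · intro x hx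
      rw [Finset.mem_coe, Finset.mem_filter] at hx
      have hdvdval : d ∣ x.val := (hker x).mp hx.2
      have hlt : x.val < q := ZMod.val_lt x
      rw [Finset.mem_coe, Finset.mem_range]
      exact Nat.div_lt_div_of_lt_of_dvd ⟨q / d, hde.symm⟩ hlt
    · intro a ha
      rw [Finset.mem_coe, Finset.mem_range] at ha
      rw [Finset.mem_coe, Finset.mem_filter]
      refine ⟨Finset.mem_univ _, ?_⟩
      have : φ ((d * a : ℕ) : ZMod q) = ((d * a : ℕ) : ZMod d) := by
        rw [map_natCast]
      rw [this, ZMod.natCast_eq_zero_iff]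
      exact Dvd.intro a rfl
    · intro x hx
      rw [Finset.mem_coe, Finset.mem_filter] at hx
      have hdvdval : d ∣ x.val := (hker x).mp hx.2
      beta_reduce
      rw [Nat.mul_div_cancel' hdvdval, ZMod.natCast_val, ZMod.cast_id]
    · intro a ha
      rw [Finset.mem_coe, Finset.mem_range] at ha
      have hlt : d * a < q := by
        calc d * a < d * (q / d) := by
              exact (mul_lt_mul_iff_right₀ (show 0 < d by omega)).mpr ha
        _ = q := hde
      beta_reduce
      rw [ZMod.val_natCast_of_lt hlt, Nat.mul_div_cancel_left a (by omega)]
  have hTsub : T = (Finset.univ.filter (fun x : ZMod q => φ x = 0)).erase 0 := by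
    ext x
    simp only [hT, Finset.mem_filter, Finset.mem_erase, Finset.mem_univ, true_and]
  have hTcard2 : T.card = q / d - 1 := by
    rw [hTsub, Finset.card_erase_of_mem (by simp), hkerEq]
  -- arithmetic endgame
  set t : ℕ := S₀.card with ht
  have key : q / d = (kp + km) * t + 1 := by
    have h1 : 1 ≤ q / d := by
      rcases Nat.eq_zero_or_pos (q / d) with h | h
      · rw [h, mul_zero] at hde; omega
      · exact h
    omega
  have hqeq : d * ((kp + km) * t + 1) = (kp + km) * n + 1 := by
    rw [← key, hde]
  rcases Nat.eq_zero_or_pos t with h0 | h1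
  · rw [h0] at hqeq; simp at hqeq; omega
  · have hexp : (kp + km) * (d * t) + d = (kp + km) * n + 1 := by rw [← hqeq]; ring
    have hle : (kp + km) * (d * t) ≤ (kp + km) * n := by omega
    have hdt : d * t ≤ n := Nat.le_of_mul_le_mul_left hle (by omega)
    have : d ≤ d * t := Nat.le_mul_of_pos_right d h1
    omega
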